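/- arXiv:1908.11195 — 4 statements merged into one kernel-verified Lean document; each statement's English description precedes it below -/
import Mathlib

section
/- For every q with 0 < q ≤ 1 and every positive integer n, |∑_{j=1}^{n} Γ(n-j+q)/Γ(n-j+1) − n^q/q| ≤ 1/q. -/
open Real Finset

lemma gamma_sum_telescope (q : ℝ) (hq0 : 0 < q) :
    ∀ n : ℕ, 1 ≤ n →
      ∑ k ∈ Finset.range n, Real.Gamma ((k : ℝ) + q) / Real.Gamma ((k : ℝ) + 1)
        = Real.Gamma ((n : ℝ) + q) / (q * Real.Gamma (n : ℝ)) := by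
  intro n hn
  induction n, hn using Nat.le_induction with
  | base =>
      simp only [Finset.range_one, Finset.sum_singleton, Nat.cast_zero, zero_add, Nat.cast_one]
      rw [show (1 : ℝ) + q = q + 1 by ring, Real.Gamma_add_one hq0.ne', Real.Gamma_one]
      field_simp
  | succ n hn ih =>
      rw [Finset.sum_range_succ, ih]
      have hn0 : (0:ℝ) < n := by exact_mod_cast hn
      have hG : (0:ℝ) < Real.Gamma n := Real.Gamma_pos_of_pos hn0
      have h1 : Real.Gamma ((n:ℝ) + 1) = n * Real.Gamma n := Real.Gamma_add_one hn0.ne'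
      have h2 : Real.Gamma ((↑(n+1):ℝ) + q) = ((n:ℝ) + q) * Real.Gamma ((n:ℝ) + q) := by
        push_cast
        rw [show (n:ℝ) + 1 + q = ((n:ℝ) + q) + 1 by ring,
          Real.Gamma_add_one (by positivity)]
      rw [h2]
      push_cast
      rw [h1]
      field_simp

lemma gamma_ratio_bound_s0 (q x : ℝ) (hq0 : 0 < q) (hq1 : q ≤ 1) (hx : 1 ≤ x) :
    |Real.Gamma (x + q) / Real.Gamma x - x ^ q| ≤ 1 := by
  have hx0 : (0:ℝ) < x := lt_of_lt_of_le one_pos hx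
  have hG : (0:ℝ) < Real.Gamma x := Real.Gamma_pos_of_pos hx0
  rcases eq_or_lt_of_le hq1 with rfl | hq1'
  · rw [Real.Gamma_add_one hx0.ne', Real.rpow_one]
    rw [mul_div_assoc, div_self hG.ne', mul_one, sub_self, abs_zero]
    exact zero_le_one
  · have hgq : (0:ℝ) < Real.Gamma (x + q) := Real.Gamma_pos_of_pos (by positivity)
    rw [abs_le]
    constructor
    · -- lower bound: Γ(x+q)/Γ(x) ≥ x (x+q)^(q-1), and x^q - x(x+q)^(q-1) ≤ q ≤ 1
      have h2 : Real.Gamma (x + 1) ≤ Real.Gamma (x+q) ^ q * Real.Gamma (x+q+1) ^ (1-q) := by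
        have := Real.Gamma_mul_add_mul_le_rpow_Gamma_mul_rpow_Gamma
          (s := x + q) (t := x + q + 1) (a := q) (b := 1 - q)
          (by positivity) (by positivity) hq0 (by linarith) (by ring)
        convert this using 2
        ring
      have h3 : Real.Gamma (x+q+1) = (x+q) * Real.Gamma (x+q) :=
        Real.Gamma_add_one (by positivity)
      rw [h3, Real.mul_rpow (by positivity) hgq.le, Real.Gamma_add_one hx0.ne'] at h2
      have h4 : Real.Gamma (x+q) ^ q * ((x+q) ^ (1-q) * Real.Gamma (x+q) ^ (1-q))
          = Real.Gamma (x+q) * (x+q) ^ (1-q) := by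
        rw [mul_comm ((x+q) ^ (1-q)) _, ← mul_assoc, ← Real.rpow_add hgq]
        ring_nf
        rw [Real.rpow_one]
        ring
      rw [h4] at h2
      -- h2 : x * Γ x ≤ Γ(x+q) * (x+q)^(1-q)
      have hxq1 : (1:ℝ) ≤ x + q := by linarith
      have h5 : x * (x+q) ^ (q-1) ≤ Real.Gamma (x+q) / Real.Gamma x := by
        rw [le_div_iff₀ hG]
        have hpow : (0:ℝ) < (x+q) ^ (1-q) := Real.rpow_pos_of_pos (by positivity) _
        calc x * (x+q) ^ (q-1) * Real.Gamma x
            = x * Real.Gamma x * ((x+q) ^ (q-1)) := by ring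
          _ = x * Real.Gamma x / ((x+q) ^ (1-q)) := by
              rw [div_eq_mul_inv, ← Real.rpow_neg (by positivity)]
              ring_nf
          _ ≤ Real.Gamma (x+q) * (x+q) ^ (1-q) / (x+q) ^ (1-q) := by
              gcongr
          _ = Real.Gamma (x+q) := by field_simp
      have h6 : x ^ q - x * (x+q) ^ (q-1) ≤ 1 := by
        have hA : x ^ q ≤ (x+q) ^ q :=
          Real.rpow_le_rpow hx0.le (by linarith) hq0.le
        have hB : (x+q) ^ q - x * (x+q) ^ (q-1) = q * (x+q) ^ (q-1) := by
          have : (x+q) ^ q = (x+q) * (x+q) ^ (q-1) := by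
            rw [← Real.rpow_one_add' (by positivity) (by intro h; linarith [hx0, hq0])]
            ring_nf
          rw [this]; ring
        have hC : (x+q) ^ (q-1) ≤ 1 :=
          Real.rpow_le_one_of_one_le_of_nonpos hxq1 (by linarith)
        nlinarith [Real.rpow_pos_of_pos (show (0:ℝ) < x + q by positivity) (q-1)]
      linarith
    · -- upper bound: Γ(x+q)/Γ(x) ≤ x^q
      have h1 : Real.Gamma (x + q) ≤ Real.Gamma x ^ (1-q) * Real.Gamma (x+1) ^ q := by
        have := Real.Gamma_mul_add_mul_le_rpow_Gamma_mul_rpow_Gamma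
          (s := x) (t := x + 1) (a := 1 - q) (b := q)
          hx0 (by positivity) (by linarith) hq0 (by ring)
        convert this using 2
        ring
      rw [Real.Gamma_add_one hx0.ne', Real.mul_rpow hx0.le hG.le] at h1
      have h2 : Real.Gamma x ^ (1-q) * (x ^ q * Real.Gamma x ^ q)
          = Real.Gamma x * x ^ q := by
        rw [mul_comm (x ^ q) _, ← mul_assoc, ← Real.rpow_add hG]
        ring_nf
        rw [Real.rpow_one]
        ring
      rw [h2] at h1
      have : Real.Gamma (x+q) / Real.Gamma x ≤ x ^ q := by
        rw [div_le_iff₀ hG]; linarith [h1]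
      linarith

theorem coeff_sum_bound (q : ℝ) (hq0 : 0 < q) (hq1 : q ≤ 1) (n : ℕ) (hn : 0 < n) :
    |(∑ j ∈ Finset.Icc 1 n, Real.Gamma ((n : ℝ) - j + q) / Real.Gamma ((n : ℝ) - j + 1))
      - (n : ℝ) ^ q / q| ≤ 1 / q := by
  have hre : (∑ j ∈ Finset.Icc 1 n, Real.Gamma ((n : ℝ) - j + q) / Real.Gamma ((n : ℝ) - j + 1))
      = ∑ k ∈ Finset.range n, Real.Gamma ((k : ℝ) + q) / Real.Gamma ((k : ℝ) + 1) := by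
    rw [← Finset.Ico_add_one_right_eq_Icc, Finset.sum_Ico_eq_sum_range]
    rw [← Finset.sum_range_reflect]
    apply Finset.sum_congr rfl
    intro i hi
    have hi' : i < n := by simpa using hi
    have h1 : 1 + (n + 1 - 1 - 1 - i) = n - i := by omega
    have h2 : (n:ℝ) - ((n - i : ℕ) : ℝ) = i := by
      rw [Nat.cast_sub hi'.le]; ring
    rw [h1, h2]
  rw [hre, gamma_sum_telescope q hq0 n hn]
  have hn0 : (0:ℝ) < n := by exact_mod_cast hn
  have hG : (0:ℝ) < Real.Gamma n := Real.Gamma_pos_of_pos hn0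
  have key := gamma_ratio_bound_s0 q n hq0 hq1 (by exact_mod_cast hn)
  have heq : Real.Gamma ((n:ℝ) + q) / (q * Real.Gamma n) - (n:ℝ) ^ q / q
      = (Real.Gamma ((n:ℝ) + q) / Real.Gamma n - (n:ℝ) ^ q) / q := by
    field_simp
  rw [heq, abs_div, abs_of_pos hq0, div_le_div_iff₀ hq0 hq0]
  exact mul_le_mul_of_nonneg_right key hq0.le
end

section
/- For every q with 0 < q ≤ 1, the quantity (∑_{j=1}^{n} Γ(n-j+q)/Γ(n-j+1)) / n^q tends to 1/q as n → ∞. -/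
open Filter Finset Real

lemma gamma_add_nat' (q : ℝ) (hq : 0 < q) (n : ℕ) :
    Real.Gamma ((n : ℝ) + q) = Real.Gamma q * ∏ k ∈ Finset.range n, (q + k) := by
  induction n with
  | zero => simp
  | succ n ih =>
    have h : ((n : ℝ) + q) ≠ 0 := by positivity
    have hcast : (((n + 1 : ℕ)) : ℝ) + q = ((n : ℝ) + q) + 1 := by push_cast; ring
    rw [hcast, Real.Gamma_add_one h, ih, Finset.prod_range_succ]
    ring

lemma sum_range_gamma (q : ℝ) (hq : 0 < q) :
    ∀ n : ℕ, 1 ≤ n →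
      ∑ k ∈ Finset.range n, Real.Gamma ((k : ℝ) + q) / Real.Gamma ((k : ℝ) + 1)
        = Real.Gamma ((n : ℝ) + q) / (q * Real.Gamma n) := by
  intro n hn
  induction n, hn using Nat.le_induction with
  | base =>
    simp only [Finset.sum_range_one, Nat.cast_zero, zero_add, Nat.cast_one]
    rw [show (1 : ℝ) + q = q + 1 by ring, Real.Gamma_add_one (ne_of_gt hq), Real.Gamma_one]
    field_simp
  | succ n hn ih =>
    have hn0 : (0 : ℝ) < n := by exact_mod_cast hn
    have hΓn : 0 < Real.Gamma (n : ℝ) := Real.Gamma_pos_of_pos hn0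
    have hnq : ((n : ℝ) + q) ≠ 0 := by positivity
    have hc1 : (((n + 1 : ℕ)) : ℝ) + q = ((n : ℝ) + q) + 1 := by push_cast; ring
    have hc2 : (((n + 1 : ℕ)) : ℝ) = (n : ℝ) + 1 := by push_cast; ring
    rw [Finset.sum_range_succ, ih, hc1, hc2, Real.Gamma_add_one hnq,
      Real.Gamma_add_one (ne_of_gt hn0)]
    field_simp

lemma reindex_sum (q : ℝ) (n : ℕ) :
    ∑ j ∈ Finset.Icc 1 n, Real.Gamma ((n : ℝ) - j + q) / Real.Gamma ((n : ℝ) - j + 1)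
      = ∑ k ∈ Finset.range n, Real.Gamma ((k : ℝ) + q) / Real.Gamma ((k : ℝ) + 1) := by
  refine Finset.sum_nbij' (fun j => n - j) (fun k => n - (k + 1) + 1) ?_ ?_ ?_ ?_ ?_
  · intro j hj
    simp only [Finset.mem_Icc] at hj
    simp only [Finset.mem_range]
    omega
  · intro k hk
    simp only [Finset.mem_range] at hk
    simp only [Finset.mem_Icc]
    omega
  · intro j hj
    simp only [Finset.mem_Icc] at hj
    omega
  · intro k hk
    simp only [Finset.mem_range] at hk
    omega
  · intro j hj
    simp only [Finset.mem_Icc] at hj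
    have : ((n - j : ℕ) : ℝ) = (n : ℝ) - j := by
      rw [Nat.cast_sub hj.2]
    rw [this]

theorem coeff_sum_asymptotic (q : ℝ) (hq0 : 0 < q) (hq1 : q ≤ 1) :
    Filter.Tendsto
      (fun n : ℕ =>
        (∑ j ∈ Finset.Icc 1 n, Real.Gamma ((n : ℝ) - j + q) / Real.Gamma ((n : ℝ) - j + 1))
          / (n : ℝ) ^ q)
      Filter.atTop (nhds (1 / q)) := by
  have hΓq : 0 < Real.Gamma q := Real.Gamma_pos_of_pos hq0
  -- the auxiliary sequence
  set g : ℕ → ℝ := fun n => ((n : ℝ) / (q + n)) * (Real.Gamma q / Real.GammaSeq q n) / q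
    with hg
  have hEq : ∀ n : ℕ, 1 ≤ n →
      (∑ j ∈ Finset.Icc 1 n, Real.Gamma ((n : ℝ) - j + q) / Real.Gamma ((n : ℝ) - j + 1))
        / (n : ℝ) ^ q = g n := by
    intro n hn
    have hn0 : (0 : ℝ) < n := by exact_mod_cast hn
    have hΓn : 0 < Real.Gamma (n : ℝ) := Real.Gamma_pos_of_pos hn0
    have hpow : (0 : ℝ) < (n : ℝ) ^ q := Real.rpow_pos_of_pos hn0 q
    have hprod : (0 : ℝ) < ∏ j ∈ Finset.range (n + 1), (q + (j : ℝ)) := by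
      apply Finset.prod_pos
      intro j _
      positivity
    have hseq : 0 < Real.GammaSeq q n := by
      unfold Real.GammaSeq
      have : (0 : ℝ) < (n.factorial : ℝ) := by exact_mod_cast n.factorial_pos
      positivity
    rw [reindex_sum, sum_range_gamma q hq0 n hn]
    simp only [hg]
    have hγ : Real.Gamma ((n : ℝ) + q) = Real.Gamma q * ∏ k ∈ Finset.range n, (q + k) :=
      gamma_add_nat' q hq0 n
    have hfac : Real.Gamma ((n : ℝ) + 1) = (n.factorial : ℝ) := by
      exact_mod_cast Real.Gamma_nat_eq_factorial n
    have hfac' : (n : ℝ) * Real.Gamma (n : ℝ) = (n.factorial : ℝ) := by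
      rw [← hfac, Real.Gamma_add_one (ne_of_gt hn0)]
    have hseqdef : Real.GammaSeq q n
        = (n : ℝ) ^ q * n.factorial / ∏ j ∈ Finset.range (n + 1), (q + j) := rfl
    rw [hseqdef]
    have hprodsucc : ∏ j ∈ Finset.range (n + 1), (q + (j : ℝ))
        = (∏ k ∈ Finset.range n, (q + (k : ℝ))) * (q + n) := Finset.prod_range_succ _ _
    have hfacpos : (0 : ℝ) < (n.factorial : ℝ) := by exact_mod_cast n.factorial_pos
    rw [hγ, hprodsucc]
    have hqn : (0 : ℝ) < q + n := by positivity
    have hprodn : (0 : ℝ) < ∏ k ∈ Finset.range n, (q + (k : ℝ)) := by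
      apply Finset.prod_pos; intro j _; positivity
    field_simp
    linear_combination
      (-1 : ℝ) * hfac'
  have hEv : ∀ᶠ n : ℕ in atTop,
      (∑ j ∈ Finset.Icc 1 n, Real.Gamma ((n : ℝ) - j + q) / Real.Gamma ((n : ℝ) - j + 1))
        / (n : ℝ) ^ q = g n := by
    filter_upwards [eventually_ge_atTop 1] with n hn using hEq n hn
  have h1 : Tendsto (fun n : ℕ => (n : ℝ) / (q + n)) atTop (nhds 1) := by
    have h0 : Tendsto (fun n : ℕ => (q + n) / (n : ℝ)) atTop (nhds 1) := by
      have := (tendsto_const_div_atTop_nhds_zero_nat q).add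
        (tendsto_const_nhds (x := (1 : ℝ)) (f := atTop (α := ℕ)))
      simp only [zero_add] at this
      refine this.congr' ?_
      filter_upwards [eventually_ge_atTop 1] with n hn
      have hne : (n : ℝ) ≠ 0 := Nat.cast_ne_zero.mpr (by omega)
      rw [add_div, div_self hne]
    have := h0.inv₀ one_ne_zero
    simp only [inv_one] at this
    refine this.congr fun n => ?_
    rw [inv_div]
  have h2 : Tendsto (fun n : ℕ => Real.Gamma q / Real.GammaSeq q n) atTop (nhds 1) := by
    have := tendsto_const_nhds (x := Real.Gamma q) (f := atTop (α := ℕ)) |>.div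
      (Real.GammaSeq_tendsto_Gamma q) (ne_of_gt hΓq)
    rwa [div_self (ne_of_gt hΓq)] at this
  have hgt : Tendsto g atTop (nhds (1 / q)) := by
    have := (h1.mul h2).div_const q
    rw [mul_one] at this
    exact this
  exact hgt.congr' (Filter.EventuallyEq.symm hEv)
end

section
/- Let q ∈ (0,1) and suppose f : ℝ → ℝ is bounded, |f(y)| ≤ C for all y. If x(n) = x₀ + (1/Γ(q)) ∑_{j=1}^{n} (Γ(n−j+q)/Γ(n−j+1)) f(x(j−1)), then |x(n) − x₀| ≤ C·(n^q + 1)/(q·Γ(q)) for all n ≥ 1. -/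
open Real Finset

-- Gautschi-type inequality via log-convexity
lemma gautschi {q : ℝ} (hq0 : 0 < q) (hq1 : q ≤ 1) (n : ℕ) (hn : 1 ≤ n) :
    Real.Gamma ((n : ℝ) + q) ≤ Real.Gamma n * (n : ℝ) ^ q := by
  have hn0 : (0:ℝ) < n := by exact_mod_cast hn
  have h1 : (n:ℝ) ∈ Set.Ioi (0:ℝ) := hn0
  have h2 : ((n:ℝ) + 1) ∈ Set.Ioi (0:ℝ) := by simp [Set.mem_Ioi]; linarith
  have hc := Real.convexOn_log_Gamma.2 h1 h2 (by linarith : (0:ℝ) ≤ 1 - q) hq0.le (by ring)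
  have hmix : (1 - q) • (n:ℝ) + q • ((n:ℝ) + 1) = (n:ℝ) + q := by
    simp [smul_eq_mul]; ring
  rw [hmix] at hc
  have hGn : 0 < Real.Gamma n := Real.Gamma_pos_of_pos hn0
  have hGq : 0 < Real.Gamma ((n:ℝ) + q) := Real.Gamma_pos_of_pos (by linarith)
  have hG1 : Real.Gamma ((n:ℝ) + 1) = n * Real.Gamma n :=
    Real.Gamma_add_one (ne_of_gt hn0)
  rw [← Real.log_le_log_iff hGq (by positivity)]
  calc Real.log (Real.Gamma ((n:ℝ) + q))
      ≤ (1 - q) * Real.log (Real.Gamma n) + q * Real.log (Real.Gamma ((n:ℝ)+1)) := hc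
    _ = Real.log (Real.Gamma n * (n:ℝ) ^ q) := by
        rw [hG1, Real.log_mul (ne_of_gt hn0) (ne_of_gt hGn),
          Real.log_mul (ne_of_gt hGn) (by positivity), Real.log_rpow hn0]
        ring

lemma telescope {q : ℝ} (hq0 : 0 < q) (n : ℕ) :
    ∑ k ∈ Finset.range n, Real.Gamma ((k : ℝ) + q) / Real.Gamma ((k : ℝ) + 1)
      = Real.Gamma ((n : ℝ) + q) / (q * Real.Gamma n) := by
  have key : ∀ k : ℕ, Real.Gamma ((k : ℝ) + q) / Real.Gamma ((k : ℝ) + 1)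
      = (Real.Gamma (((k+1 : ℕ) : ℝ) + q) / Real.Gamma ((k+1 : ℕ))
        - Real.Gamma ((k : ℝ) + q) / Real.Gamma k) / q := by
    intro k
    cases k with
    | zero =>
      simp only [Nat.cast_zero, zero_add, Nat.cast_one, Real.Gamma_zero, Real.Gamma_one,
        div_zero, sub_zero, div_one]
      rw [show (1:ℝ)+q = q+1 by ring, Real.Gamma_add_one (ne_of_gt hq0),
        mul_div_cancel_left₀ _ (ne_of_gt hq0)]
    | succ m =>
      have hk0 : (0:ℝ) < (m:ℝ) + 1 := by positivity
      have hGk : 0 < Real.Gamma ((m:ℝ) + 1) := Real.Gamma_pos_of_pos hk0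
      have h1 : Real.Gamma (((m:ℝ) + 1) + 1) = ((m:ℝ)+1) * Real.Gamma ((m:ℝ)+1) :=
        Real.Gamma_add_one (ne_of_gt hk0)
      have h2 : Real.Gamma (((m:ℝ)+1) + 1 + q) = ((m:ℝ) + 1 + q) * Real.Gamma ((m:ℝ) + 1 + q) := by
        rw [show (m:ℝ) + 1 + 1 + q = ((m:ℝ) + 1 + q) + 1 by ring,
          Real.Gamma_add_one (by positivity)]
      push_cast
      rw [h2, h1]
      field_simp
      ring
  calc ∑ k ∈ Finset.range n, Real.Gamma ((k : ℝ) + q) / Real.Gamma ((k : ℝ) + 1)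
      = ∑ k ∈ Finset.range n, ((fun m : ℕ => Real.Gamma ((m:ℝ)+q)/Real.Gamma (m:ℝ)) (k+1)
          - (fun m : ℕ => Real.Gamma ((m:ℝ)+q)/Real.Gamma (m:ℝ)) k) / q := by
        refine Finset.sum_congr rfl fun k _ => ?_
        exact key k
    _ = Real.Gamma ((n : ℝ) + q) / (q * Real.Gamma n) := by
        rw [← Finset.sum_div, Finset.sum_range_sub
          (fun m : ℕ => Real.Gamma ((m:ℝ)+q)/Real.Gamma (m:ℝ))]
        simp [Real.Gamma_zero, div_div]
        ring_nf

lemma reindex (n : ℕ) (h : ℕ → ℝ) :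
    ∑ j ∈ Finset.Icc 1 n, h (n - j) = ∑ k ∈ Finset.range n, h k := by
  refine Finset.sum_nbij' (fun j => n - j) (fun k => n - k) ?_ ?_ ?_ ?_ ?_
  · intro j hj
    simp only [Finset.mem_Icc] at hj
    simp only [Finset.mem_range]
    omega
  · intro k hk
    simp only [Finset.mem_range] at hk
    simp only [Finset.mem_Icc]
    omega
  · intro j hj
    simp only [Finset.mem_Icc] at hj
    omega
  · intro k hk
    simp only [Finset.mem_range] at hk
    omega
  · intro j hj; rfl

theorem fractional_orbit_bound (q : ℝ) (hq : q ∈ Set.Ioo (0:ℝ) 1) (x₀ C : ℝ)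
    (f : ℝ → ℝ) (hf : ∀ y, |f y| ≤ C) (x : ℕ → ℝ)
    (hx : ∀ n : ℕ, x n = x₀ + (1 / Real.Gamma q) *
      ∑ j ∈ Finset.Icc 1 n,
        Real.Gamma ((n : ℝ) - j + q) / Real.Gamma ((n : ℝ) - j + 1) * f (x (j - 1))) :
    ∀ n : ℕ, 1 ≤ n → |x n - x₀| ≤ C * ((n : ℝ) ^ q + 1) / (q * Real.Gamma q) := by
  obtain ⟨hq0, hq1⟩ := hq
  intro n hn
  have hn0 : (0:ℝ) < n := by exact_mod_cast hn
  have hΓq : 0 < Real.Gamma q := Real.Gamma_pos_of_pos hq0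
  have hΓn : 0 < Real.Gamma n := Real.Gamma_pos_of_pos hn0
  have hC : 0 ≤ C := le_trans (abs_nonneg _) (hf 0)
  have hxe : x n - x₀ = (1 / Real.Gamma q) *
      ∑ j ∈ Finset.Icc 1 n,
        Real.Gamma ((n : ℝ) - j + q) / Real.Gamma ((n : ℝ) - j + 1) * f (x (j - 1)) := by
    rw [hx n]; ring
  -- bound the sum of absolute values
  have hterm : ∀ j ∈ Finset.Icc 1 n,
      |Real.Gamma ((n : ℝ) - j + q) / Real.Gamma ((n : ℝ) - j + 1) * f (x (j - 1))|
        ≤ Real.Gamma ((n : ℝ) - j + q) / Real.Gamma ((n : ℝ) - j + 1) * C := by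
    intro j hj
    simp only [Finset.mem_Icc] at hj
    have hjn : (j:ℝ) ≤ n := by exact_mod_cast hj.2
    have h1 : 0 < (n:ℝ) - j + q := by linarith
    have h2 : 0 < (n:ℝ) - j + 1 := by linarith
    have hg : 0 ≤ Real.Gamma ((n : ℝ) - j + q) / Real.Gamma ((n : ℝ) - j + 1) :=
      le_of_lt (div_pos (Real.Gamma_pos_of_pos h1) (Real.Gamma_pos_of_pos h2))
    rw [abs_mul, abs_of_nonneg hg]
    exact mul_le_mul_of_nonneg_left (hf _) hg
  have hsum : ∑ j ∈ Finset.Icc 1 n,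
        Real.Gamma ((n : ℝ) - j + q) / Real.Gamma ((n : ℝ) - j + 1)
      = Real.Gamma ((n : ℝ) + q) / (q * Real.Gamma n) := by
    have hcast : ∀ j ∈ Finset.Icc 1 n,
        Real.Gamma ((n : ℝ) - j + q) / Real.Gamma ((n : ℝ) - j + 1)
          = (fun k : ℕ => Real.Gamma ((k:ℝ) + q) / Real.Gamma ((k:ℝ) + 1)) (n - j) := by
      intro j hj
      simp only [Finset.mem_Icc] at hj
      have : ((n - j : ℕ) : ℝ) = (n:ℝ) - j := by
        rw [Nat.cast_sub hj.2]
      simp only [this]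
    rw [Finset.sum_congr rfl hcast,
      reindex n (fun k : ℕ => Real.Gamma ((k:ℝ) + q) / Real.Gamma ((k:ℝ) + 1)),
      telescope hq0]
  calc |x n - x₀|
      = (1 / Real.Gamma q) * |∑ j ∈ Finset.Icc 1 n,
          Real.Gamma ((n : ℝ) - j + q) / Real.Gamma ((n : ℝ) - j + 1) * f (x (j - 1))| := by
        rw [hxe, abs_mul, abs_of_pos (by positivity : (0:ℝ) < 1 / Real.Gamma q)]
    _ ≤ (1 / Real.Gamma q) * ∑ j ∈ Finset.Icc 1 n,
          Real.Gamma ((n : ℝ) - j + q) / Real.Gamma ((n : ℝ) - j + 1) * C := by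
        refine mul_le_mul_of_nonneg_left ?_ (by positivity)
        exact (Finset.abs_sum_le_sum_abs _ _).trans (Finset.sum_le_sum hterm)
    _ = (1 / Real.Gamma q) * (Real.Gamma ((n : ℝ) + q) / (q * Real.Gamma n)) * C := by
        rw [← Finset.sum_mul, hsum]; ring
    _ ≤ (1 / Real.Gamma q) * ((Real.Gamma n * (n:ℝ) ^ q) / (q * Real.Gamma n)) * C := by
        have := gautschi hq0 hq1.le n hn
        gcongr
    _ = C * (n:ℝ)^q / (q * Real.Gamma q) := by
        field_simp
    _ ≤ C * ((n : ℝ) ^ q + 1) / (q * Real.Gamma q) := by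
        gcongr
        linarith
end

section
/- For 0 < q < 1 and integer n ≥ 1, Γ(n+q)/(q·Γ(n)) − n^q/q is bounded in absolute value by 1/q; equivalently, |Γ(n+q)/Γ(n) − n^q| ≤ 1. -/
open Real

lemma gamma_convex_mul (x y a b : ℝ) (hx : 0 < x) (hy : 0 < y)
    (ha : 0 ≤ a) (hb : 0 ≤ b) (hab : a + b = 1) :
    Real.Gamma (a * x + b * y) ≤ Real.Gamma x ^ a * Real.Gamma y ^ b := by
  have h := Real.convexOn_log_Gamma.2 (Set.mem_Ioi.mpr hx) (Set.mem_Ioi.mpr hy) ha hb hab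
  simp only [Function.comp_apply, smul_eq_mul] at h
  have hpos : 0 < a * x + b * y := by
    rcases ha.lt_or_eq with h0 | h0
    · nlinarith [mul_nonneg hb hy.le, mul_pos h0 hx]
    · have hb1 : b = 1 := by linarith
      rw [← h0, hb1]; simpa using hy
  have hg : 0 < Real.Gamma (a * x + b * y) := Real.Gamma_pos_of_pos hpos
  have := Real.exp_le_exp.mpr h
  rw [mul_comm a (Real.log (Real.Gamma x)), mul_comm b (Real.log (Real.Gamma y))] at this
  rwa [Real.exp_log hg, Real.exp_add, ← Real.rpow_def_of_pos (Real.Gamma_pos_of_pos hx),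
    ← Real.rpow_def_of_pos (Real.Gamma_pos_of_pos hy)] at this

theorem gamma_ratio_bound (q : ℝ) (hq : q ∈ Set.Ioo (0:ℝ) 1) :
    ∀ n : ℕ, 1 ≤ n →
      |Real.Gamma ((n : ℝ) + q) / (q * Real.Gamma (n : ℝ)) - (n : ℝ) ^ q / q| ≤ 1 / q ∧
      |Real.Gamma ((n : ℝ) + q) / Real.Gamma (n : ℝ) - (n : ℝ) ^ q| ≤ 1 := by
  obtain ⟨hq0, hq1⟩ := hq
  intro n hn
  have hn1 : (1:ℝ) ≤ (n:ℝ) := by exact_mod_cast hn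
  have hnpos : (0:ℝ) < n := by linarith
  have hG : 0 < Real.Gamma (n:ℝ) := Real.Gamma_pos_of_pos hnpos
  have hGq : 0 < Real.Gamma ((n:ℝ) + q) := Real.Gamma_pos_of_pos (by linarith)
  have hGn1 : Real.Gamma ((n:ℝ) + 1) = n * Real.Gamma n := Real.Gamma_add_one hnpos.ne'
  -- Upper bound: Γ(n+q) ≤ Γ(n) * n^q
  have hup : Real.Gamma ((n:ℝ) + q) ≤ Real.Gamma n * (n:ℝ) ^ q := by
    have h := gamma_convex_mul (n:ℝ) ((n:ℝ)+1) (1-q) q hnpos (by linarith)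
      (by linarith) hq0.le (by ring)
    have he : (1-q) * (n:ℝ) + q * ((n:ℝ)+1) = (n:ℝ) + q := by ring
    rw [he, hGn1, Real.mul_rpow hnpos.le hG.le] at h
    calc Real.Gamma ((n:ℝ) + q) ≤ Real.Gamma (n:ℝ) ^ (1-q) * ((n:ℝ) ^ q * Real.Gamma (n:ℝ) ^ q) := h
      _ = Real.Gamma (n:ℝ) ^ (1-q) * Real.Gamma (n:ℝ) ^ q * (n:ℝ) ^ q := by ring
      _ = Real.Gamma n * (n:ℝ) ^ q := by
          rw [← Real.rpow_add hG]; norm_num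
  -- Lower bound: n * Γ(n) ≤ Γ(n+q) * (n+q)^(1-q)
  have hlow : (n:ℝ) * Real.Gamma n ≤ Real.Gamma ((n:ℝ)+q) * ((n:ℝ)+q) ^ (1-q) := by
    have h := gamma_convex_mul ((n:ℝ)+q) ((n:ℝ)+1+q) q (1-q) (by linarith) (by linarith)
      hq0.le (by linarith) (by ring)
    have he : q * ((n:ℝ)+q) + (1-q) * ((n:ℝ)+1+q) = (n:ℝ) + 1 := by ring
    have hG1 : Real.Gamma ((n:ℝ)+1+q) = ((n:ℝ)+q) * Real.Gamma ((n:ℝ)+q) := by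
      have h' : (n:ℝ)+1+q = ((n:ℝ)+q)+1 := by ring
      rw [h', Real.Gamma_add_one (by linarith)]
    rw [he, hGn1, hG1, Real.mul_rpow (by linarith) hGq.le] at h
    calc (n:ℝ) * Real.Gamma n ≤ Real.Gamma ((n:ℝ)+q) ^ q * (((n:ℝ)+q) ^ (1-q) * Real.Gamma ((n:ℝ)+q) ^ (1-q)) := h
      _ = Real.Gamma ((n:ℝ)+q) ^ q * Real.Gamma ((n:ℝ)+q) ^ (1-q) * ((n:ℝ)+q) ^ (1-q) := by ring
      _ = Real.Gamma ((n:ℝ)+q) * ((n:ℝ)+q) ^ (1-q) := by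
          rw [← Real.rpow_add hGq]; norm_num
  -- derive: n^q - 1 ≤ Γ(n+q)/Γ(n) ≤ n^q
  have hub : Real.Gamma ((n:ℝ)+q) / Real.Gamma n ≤ (n:ℝ) ^ q := by
    rw [div_le_iff₀ hG]; linarith [hup]
  have hlb : (n:ℝ) ^ q - 1 ≤ Real.Gamma ((n:ℝ)+q) / Real.Gamma n := by
    have hmul : ((n:ℝ)+q) ^ (1-q) * ((n:ℝ)+q) ^ (q-1) = 1 := by
      rw [← Real.rpow_add (by linarith)]; norm_num
    have h1 : (n:ℝ) * ((n:ℝ)+q) ^ (q-1) ≤ Real.Gamma ((n:ℝ)+q) / Real.Gamma n := by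
      rw [le_div_iff₀ hG]
      have hp : (0:ℝ) < ((n:ℝ)+q) ^ (q-1) := Real.rpow_pos_of_pos (by linarith) _
      have h := mul_le_mul_of_nonneg_right hlow hp.le
      calc (n:ℝ) * ((n:ℝ)+q)^(q-1) * Real.Gamma n = (n:ℝ) * Real.Gamma n * ((n:ℝ)+q)^(q-1) := by ring
        _ ≤ Real.Gamma ((n:ℝ)+q) * ((n:ℝ)+q)^(1-q) * ((n:ℝ)+q)^(q-1) := h
        _ = Real.Gamma ((n:ℝ)+q) * (((n:ℝ)+q)^(1-q) * ((n:ℝ)+q)^(q-1)) := by ring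
        _ = Real.Gamma ((n:ℝ)+q) := by rw [hmul, mul_one]
    have h2 : (n:ℝ) * ((n:ℝ)+1) ^ (q-1) ≤ (n:ℝ) * ((n:ℝ)+q) ^ (q-1) := by
      apply mul_le_mul_of_nonneg_left _ hnpos.le
      exact Real.rpow_le_rpow_of_nonpos (by linarith) (by linarith) (by linarith)
    have h3' : ((n:ℝ)+1) * ((n:ℝ)+1)^(q-1) = ((n:ℝ)+1) ^ q := by
      nth_rewrite 1 [← Real.rpow_one ((n:ℝ)+1)]
      rw [← Real.rpow_add (by linarith)]
      norm_num
    have h3 : (n:ℝ)*((n:ℝ)+1)^(q-1) = ((n:ℝ)+1)^q - ((n:ℝ)+1)^(q-1) := by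
      rw [← h3']; ring
    have h4 : ((n:ℝ)+1) ^ (q-1) ≤ 1 :=
      Real.rpow_le_one_of_one_le_of_nonpos (by linarith) (by linarith)
    have h5 : (n:ℝ) ^ q ≤ ((n:ℝ)+1) ^ q :=
      Real.rpow_le_rpow hnpos.le (by linarith) hq0.le
    linarith
  have key : |Real.Gamma ((n : ℝ) + q) / Real.Gamma (n : ℝ) - (n : ℝ) ^ q| ≤ 1 := by
    rw [abs_le]; constructor <;> linarith
  refine ⟨?_, key⟩
  have heq : Real.Gamma ((n : ℝ) + q) / (q * Real.Gamma (n : ℝ)) - (n : ℝ) ^ q / q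
      = (Real.Gamma ((n : ℝ) + q) / Real.Gamma (n : ℝ) - (n : ℝ) ^ q) / q := by
    field_simp
  rw [heq, abs_div, abs_of_pos hq0]
  gcongr
end
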